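/- arXiv:1812.08905 — 2 statements merged into one kernel-verified Lean document; each statement's English description precedes it below -/
import Mathlib

section
/- Let 0 ≤ r and k ≥ 0 be integers with r + k < N, and let W ∈ W_r. Then A₋A₊^{k+1}W = m(r,k)·A₊^{k}W. -/
open Finset

/-- Outer adjacency operator on vertex functions of the Boolean hypercube `B_N`:
`(A₊V)(S) = Σ_{s∈S} V(S∖{s})`. -/
def Aplus (N : ℕ) (V : Finset (Fin N) → ℝ) : Finset (Fin N) → ℝ :=
  fun S => ∑ s ∈ S, V (S.erase s)

/-- Inner adjacency operator: `(A₋V)(R) = Σ_{b∉R} V(R∪{b})`. -/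
def Aminus (N : ℕ) (V : Finset (Fin N) → ℝ) : Finset (Fin N) → ℝ :=
  fun R => ∑ b ∈ Rᶜ, V (insert b R)

/-- Adjacency operator `A = A₊ + A₋`. -/
def Adj (N : ℕ) (V : Finset (Fin N) → ℝ) : Finset (Fin N) → ℝ :=
  fun S => Aplus N V S + Aminus N V S

/-- Graph Laplacian `L = N·I − A`. -/
def Lap (N : ℕ) (V : Finset (Fin N) → ℝ) : Finset (Fin N) → ℝ :=
  fun S => (N : ℝ) * V S - Adj N V S

/-- Inner product `⟨V,U⟩ = Σ_S V(S)U(S)` on vertex functions. -/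
def inner' (N : ℕ) (V U : Finset (Fin N) → ℝ) : ℝ :=
  ∑ S : Finset (Fin N), V S * U S

/-- `V` is supported on the Hamming sphere `Σ_r` (vanishes off sets of cardinality `r`). -/
def suppOn (N r : ℕ) (V : Finset (Fin N) → ℝ) : Prop :=
  ∀ S : Finset (Fin N), S.card ≠ r → V S = 0

/-- Membership in `W_r`: supported on `Σ_r` and orthogonal to `A₊ℓ²(Σ_{r−1})`.
(For `r = 0` the orthogonality condition is vacuous, so `W_0 = ℓ²(Σ_0)`.) -/
def memW (N r : ℕ) (W : Finset (Fin N) → ℝ) : Prop :=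
  suppOn N r W ∧
    ∀ U : Finset (Fin N) → ℝ, suppOn N (r - 1) U → inner' N W (Aplus N U) = 0

/-- `m(r,k) = Σ_{j=0}^{k} (N − 2(r+j))`. -/
def mcoef (N r k : ℕ) : ℝ :=
  ∑ j ∈ Finset.range (k + 1), ((N : ℝ) - 2 * ((r : ℝ) + (j : ℝ)))

/-- Hadamard vector `H_S(R) = (−1)^{|R∩S|}`. -/
def Had (N : ℕ) (S R : Finset (Fin N)) : ℝ := (-1 : ℝ) ^ (R ∩ S).card

/-- Spatial truncation `Q_K`: restriction to the Hamming ball of radius `K`. -/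
def QK (N K : ℕ) (V : Finset (Fin N) → ℝ) : Finset (Fin N) → ℝ :=
  fun S => if S.card ≤ K then V S else 0

/-- Spectral projection `P_K`: orthogonal projection onto `span{H_S : |S| ≤ K}`,
given by `P_K V = Σ_{|S|≤K} (⟨V,H_S⟩/2^N)·H_S`. -/
noncomputable def PK (N K : ℕ) (V : Finset (Fin N) → ℝ) : Finset (Fin N) → ℝ :=
  fun R => ∑ S ∈ Finset.univ.filter (fun S : Finset (Fin N) => S.card ≤ K),
    (inner' N V (Had N S) / 2 ^ N) * Had N S R

/-- Diagonal operator `(TV)(R) = √(2|R|)·V(R)`. -/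
noncomputable def Tdiag (N : ℕ) (V : Finset (Fin N) → ℝ) : Finset (Fin N) → ℝ :=
  fun R => Real.sqrt (2 * (R.card : ℝ)) * V R

/-- Boolean difference operator conjugated by the Hadamard transform:
`HBDO = T(αI − L)T + βL`. -/
noncomputable def HBDO (N : ℕ) (α β : ℝ) (V : Finset (Fin N) → ℝ) : Finset (Fin N) → ℝ :=
  fun R => Tdiag N (fun S => α * Tdiag N V S - Lap N (Tdiag N V) S) R + β * Lap N V R

/-- Hadamard transform `(HV)(R) = Σ_S (−1)^{|R∩S|} V(S)`. -/
def Hmat (N : ℕ) (V : Finset (Fin N) → ℝ) : Finset (Fin N) → ℝ :=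
  fun R => ∑ S : Finset (Fin N), Had N S R * V S

/-- Commutator `C = A₋A₊ − A₊A₋`. -/
def Cop (N : ℕ) (V : Finset (Fin N) → ℝ) : Finset (Fin N) → ℝ :=
  fun S => Aminus N (Aplus N V) S - Aplus N (Aminus N V) S

lemma aplus_smul (N : ℕ) (c : ℝ) (V : Finset (Fin N) → ℝ) :
    Aplus N (c • V) = c • Aplus N V := by
  funext S
  simp [Aplus, Finset.mul_sum]

lemma suppOn_aplus (N r : ℕ) (V : Finset (Fin N) → ℝ) (h : suppOn N r V) :
    suppOn N (r + 1) (Aplus N V) := by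
  intro S hS
  apply Finset.sum_eq_zero
  intro s hs
  apply h
  rw [Finset.card_erase_of_mem hs]
  intro hc
  apply hS
  have hpos : 1 ≤ S.card := Finset.card_pos.mpr ⟨s, hs⟩
  omega

lemma suppOn_aplus_iter (N r : ℕ) (V : Finset (Fin N) → ℝ) (h : suppOn N r V) :
    ∀ k, suppOn N (r + k) ((Aplus N)^[k] V) := by
  intro k
  induction k with
  | zero => simpa using h
  | succ k ih =>
    rw [Function.iterate_succ_apply']
    have := suppOn_aplus N (r + k) _ ih
    simpa [Nat.add_assoc] using this

lemma suppOn_aminus (N r : ℕ) (V : Finset (Fin N) → ℝ) (h : suppOn N r V) :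
    suppOn N (r - 1) (Aminus N V) := by
  intro R hR
  apply Finset.sum_eq_zero
  intro b hb
  apply h
  rw [Finset.card_insert_of_notMem (Finset.mem_compl.mp hb)]
  omega

lemma adjoint' (N : ℕ) (V U : Finset (Fin N) → ℝ) :
    inner' N V (Aplus N U) = inner' N (Aminus N V) U := by
  unfold inner' Aplus Aminus
  simp only [Finset.mul_sum, Finset.sum_mul]
  rw [Finset.sum_sigma', Finset.sum_sigma']
  apply Finset.sum_nbij' (fun p => ⟨p.1.erase p.2, p.2⟩)
    (fun p => ⟨insert p.2 p.1, p.2⟩)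
  · intro p hp
    simp only [Finset.mem_sigma, Finset.mem_univ, true_and] at hp ⊢
    simp [Finset.mem_compl]
  · intro p hp
    simp only [Finset.mem_sigma, Finset.mem_univ, true_and] at hp ⊢
    simp
  · intro p hp
    simp only [Finset.mem_sigma, Finset.mem_univ, true_and] at hp
    simp [Finset.insert_erase hp]
  · intro p hp
    simp only [Finset.mem_sigma, Finset.mem_univ, true_and, Finset.mem_compl] at hp
    simp [Finset.erase_insert hp]
  · intro p hp
    simp only [Finset.mem_sigma, Finset.mem_univ, true_and] at hp
    simp [Finset.insert_erase hp]

lemma aminus_eq_zero (N r : ℕ) (W : Finset (Fin N) → ℝ) (hW : memW N r W) :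
    Aminus N W = 0 := by
  have h := hW.2 (Aminus N W) (suppOn_aminus N r W hW.1)
  rw [adjoint'] at h
  funext S
  have := (Finset.sum_eq_zero_iff_of_nonneg
    (fun i _ => mul_self_nonneg (Aminus N W i))).mp h S (Finset.mem_univ S)
  simpa using mul_self_eq_zero.mp this

lemma commAA (N : ℕ) (V : Finset (Fin N) → ℝ) (R : Finset (Fin N)) :
    Aminus N (Aplus N V) R
      = Aplus N (Aminus N V) R + ((N : ℝ) - 2 * R.card) * V R := by
  unfold Aminus Aplus
  have h1 : ∀ b ∈ Rᶜ, (∑ s ∈ insert b R, V ((insert b R).erase s))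
      = V R + ∑ s ∈ R, V (insert b (R.erase s)) := by
    intro b hb
    rw [Finset.mem_compl] at hb
    rw [Finset.sum_insert hb, Finset.erase_insert hb]
    congr 1
    apply Finset.sum_congr rfl
    intro s hs
    congr 1
    exact Finset.erase_insert_of_ne (fun h => hb (h ▸ hs))
  have h2 : ∀ s ∈ R, (∑ b ∈ (R.erase s)ᶜ, V (insert b (R.erase s)))
      = V R + ∑ b ∈ Rᶜ, V (insert b (R.erase s)) := by
    intro s hs
    have hc : (R.erase s)ᶜ = insert s Rᶜ := by
      ext x
      simp only [Finset.mem_compl, Finset.mem_erase, Finset.mem_insert]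
      by_cases hx : x = s <;> simp [hx]
    rw [hc, Finset.sum_insert (by simp [Finset.mem_compl, hs]),
      Finset.insert_erase hs]
  rw [Finset.sum_congr rfl h1, Finset.sum_congr rfl h2,
    Finset.sum_add_distrib, Finset.sum_add_distrib, Finset.sum_const,
    Finset.sum_const, Finset.sum_comm]
  have hcard : (Rᶜ.card : ℝ) = (N : ℝ) - R.card := by
    have : Rᶜ.card = N - R.card := by
      simp [Finset.card_compl]
    rw [this, Nat.cast_sub (by simpa using Finset.card_le_univ R)]
  have hle : (R.card : ℝ) ≤ (N : ℝ) := by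
    exact_mod_cast (by simpa using Finset.card_le_univ R : R.card ≤ N)
  rw [nsmul_eq_mul, nsmul_eq_mul, hcard]
  ring

/-- for `W ∈ W_r` and `r + k < N`, `A₋A₊^{k+1}W = m(r,k)·A₊^{k}W`. -/
theorem aminus_aplus_pow (N r k : ℕ) (hN : 1 ≤ N) (hrk : r + k < N)
    (W : Finset (Fin N) → ℝ) (hW : memW N r W) :
    Aminus N ((Aplus N)^[k + 1] W) = mcoef N r k • (Aplus N)^[k] W := by
  induction k with
  | zero =>
    funext S
    rw [Function.iterate_one, Function.iterate_zero, id]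
    rw [commAA]
    rw [aminus_eq_zero N r W hW]
    have hz : Aplus N (0 : Finset (Fin N) → ℝ) S = 0 := by
      simp [Aplus]
    rw [hz, zero_add]
    have hm : mcoef N r 0 = (N : ℝ) - 2 * r := by
      simp [mcoef]
    rw [hm, Pi.smul_apply, smul_eq_mul]
    by_cases hS : S.card = r
    · rw [hS]
    · rw [hW.1 S hS, mul_zero, mul_zero]
  | succ k ih =>
    have ih' := ih (by omega)
    funext S
    rw [show k + 1 + 1 = (k + 1) + 1 from rfl, Function.iterate_succ_apply']
    rw [commAA]
    rw [show (Aplus N)^[k + 1] W = Aplus N ((Aplus N)^[k] W) from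
      Function.iterate_succ_apply' (Aplus N) k W]
    rw [← Function.iterate_succ_apply' (Aplus N) k W, ih', aplus_smul,
      Function.iterate_succ_apply' (Aplus N) k W,
      ← Function.iterate_succ_apply' (Aplus N) k W]
    have hsupp := suppOn_aplus_iter N r W hW.1 (k + 1)
    have hm : mcoef N r (k + 1)
        = mcoef N r k + ((N : ℝ) - 2 * ((r : ℝ) + (k + 1 : ℕ))) := by
      unfold mcoef
      rw [Finset.sum_range_succ]
    simp only [Pi.smul_apply, smul_eq_mul]
    by_cases hS : S.card = r + (k + 1)
    · rw [hS, hm]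
      push_cast
      ring
    · rw [hsupp S hS, mul_zero, mul_zero, mul_zero, add_zero]
end

section
/- Fix real numbers α, β, an integer 0 ≤ r ≤ N, and λ ∈ ℝ. Suppose the real numbers c_0, …, c_{N−r} satisfy, for every 0 ≤ j ≤ N−r, (2(r+j)(α−N) + βN)·c_j + (2√((r+j)(r+j+1)) − β)·m(r,j)·c_{j+1} + (2√((r+j)(r+j−1)) − β)·c_{j−1} = λ·c_j, with the conventions c_{−1} = 0 and c_{N−r+1} = 0. Then for every W ∈ W_r, the vertex function V = Σ_{j=0}^{N−r} c_j·A₊^{j}W satisfies HBDO V = λV. -/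
open Finset

namespace HBDOaux

variable {N : ℕ}

lemma aplus_sum {ι : Type*} (s : Finset ι) (f : ι → Finset (Fin N) → ℝ) :
    Aplus N (∑ i ∈ s, f i) = ∑ i ∈ s, Aplus N (f i) := by
  funext S
  simp only [Aplus, Finset.sum_apply]
  exact Finset.sum_comm

lemma aplus_smul (k : ℝ) (V : Finset (Fin N) → ℝ) :
    Aplus N (k • V) = k • Aplus N V := by
  funext S
  simp [Aplus, Finset.mul_sum]

lemma aminus_sum {ι : Type*} (s : Finset ι) (f : ι → Finset (Fin N) → ℝ) :
    Aminus N (∑ i ∈ s, f i) = ∑ i ∈ s, Aminus N (f i) := by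
  funext S
  simp only [Aminus, Finset.sum_apply]
  exact Finset.sum_comm

lemma aminus_smul (k : ℝ) (V : Finset (Fin N) → ℝ) :
    Aminus N (k • V) = k • Aminus N V := by
  funext S
  simp [Aminus, Finset.mul_sum]

lemma suppOn_aplus {k : ℕ} {V : Finset (Fin N) → ℝ} (h : suppOn N k V) :
    suppOn N (k+1) (Aplus N V) := by
  intro S hS
  refine Finset.sum_eq_zero fun s hs => ?_
  apply h
  have h1 : 1 ≤ S.card := Finset.card_pos.mpr ⟨s, hs⟩
  rw [Finset.card_erase_of_mem hs]
  omega

lemma suppOn_iter {r : ℕ} {W : Finset (Fin N) → ℝ} (hW : suppOn N r W) (j : ℕ) :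
    suppOn N (r + j) ((Aplus N)^[j] W) := by
  induction j with
  | zero => simpa using hW
  | succ j ih =>
    rw [Function.iterate_succ_apply']
    exact suppOn_aplus ih

lemma card_le (S : Finset (Fin N)) : S.card ≤ N := by
  simpa using Finset.card_le_univ S

lemma iter_top {r n : ℕ} {W : Finset (Fin N) → ℝ} (hW : suppOn N r W) (hn : N < r + n) :
    (Aplus N)^[n] W = 0 := by
  funext S
  have hS : S.card ≤ N := card_le S
  exact suppOn_iter hW n S (by omega)

lemma comm_pointwise (V : Finset (Fin N) → ℝ) (S : Finset (Fin N)) :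
    Aminus N (Aplus N V) S = Aplus N (Aminus N V) S + ((N:ℝ) - 2 * S.card) * V S := by
  have hminusplus : Aminus N (Aplus N V) S
      = ∑ b ∈ Sᶜ, (V S + ∑ s ∈ S, V (insert b (S.erase s))) := by
    unfold Aminus Aplus
    refine Finset.sum_congr rfl fun b hb => ?_
    have hbS : b ∉ S := by simpa using hb
    rw [Finset.sum_insert hbS, Finset.erase_insert hbS]
    congr 1
    refine Finset.sum_congr rfl fun s hs => ?_
    rw [Finset.erase_insert_of_ne (by rintro rfl; exact hbS hs)]
  have hplusminus : Aplus N (Aminus N V) S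
      = ∑ s ∈ S, (V S + ∑ b ∈ Sᶜ, V (insert b (S.erase s))) := by
    unfold Aplus Aminus
    refine Finset.sum_congr rfl fun s hs => ?_
    rw [Finset.compl_erase, Finset.sum_insert (by simp [hs]), Finset.insert_erase hs]
  have hswap : ∑ b ∈ Sᶜ, ∑ s ∈ S, V (insert b (S.erase s))
      = ∑ s ∈ S, ∑ b ∈ Sᶜ, V (insert b (S.erase s)) := Finset.sum_comm
  rw [hminusplus, hplusminus, Finset.sum_add_distrib, Finset.sum_add_distrib,
    Finset.sum_const, Finset.sum_const, hswap]
  have hcard : (Sᶜ).card = N - S.card := by simp [Finset.card_compl]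
  have hle : S.card ≤ N := card_le S
  rw [hcard]
  push_cast [nsmul_eq_mul, Nat.cast_sub hle]
  ring

lemma inner_aplus_eq (W U : Finset (Fin N) → ℝ) :
    inner' N W (Aplus N U) = inner' N (Aminus N W) U := by
  unfold inner' Aplus Aminus
  simp_rw [Finset.mul_sum, Finset.sum_mul]
  rw [Finset.sum_sigma' Finset.univ (fun S => S)
      (fun S s => W S * U (S.erase s)),
    Finset.sum_sigma' Finset.univ (fun (R : Finset (Fin N)) => Rᶜ)
      (fun R b => W (insert b R) * U R)]
  refine Finset.sum_bij' (fun p _ => (⟨p.1.erase p.2, p.2⟩ : (_ : Finset (Fin N)) × Fin N))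
    (fun q _ => (⟨insert q.2 q.1, q.2⟩ : (_ : Finset (Fin N)) × Fin N)) ?_ ?_ ?_ ?_ ?_
  · intro p hp
    simp only [Finset.mem_sigma, Finset.mem_univ, true_and] at hp ⊢
    simp
  · intro q hq
    simp only [Finset.mem_sigma, Finset.mem_univ, true_and, Finset.mem_compl] at hq ⊢
    simp
  · intro p hp
    simp only [Finset.mem_sigma, Finset.mem_univ, true_and] at hp
    simp [Finset.insert_erase hp]
  · intro q hq
    simp only [Finset.mem_sigma, Finset.mem_univ, true_and, Finset.mem_compl] at hq
    simp [Finset.erase_insert hq]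
  · intro p hp
    simp only [Finset.mem_sigma, Finset.mem_univ, true_and] at hp
    rw [Finset.insert_erase hp]

lemma aminus_eq_zero {r : ℕ} {W : Finset (Fin N) → ℝ} (hW : memW N r W) :
    Aminus N W = 0 := by
  rcases Nat.eq_zero_or_pos r with hr | hr
  · subst hr
    funext R
    refine Finset.sum_eq_zero fun b hb => ?_
    apply hW.1
    have hbR : b ∉ R := by simpa using hb
    simp [Finset.card_insert_of_notMem hbR]
  · have hsupp : suppOn N (r-1) (Aminus N W) := by
      intro R hR
      refine Finset.sum_eq_zero fun b hb => ?_
      apply hW.1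
      have hbR : b ∉ R := by simpa using hb
      rw [Finset.card_insert_of_notMem hbR]
      omega
    have h := hW.2 (Aminus N W) hsupp
    rw [inner_aplus_eq] at h
    funext S
    have hterm := (Finset.sum_eq_zero_iff_of_nonneg
      (fun S _ => mul_self_nonneg (Aminus N W S))).mp h S (Finset.mem_univ S)
    simpa using mul_self_eq_zero.mp hterm
lemma mcoef_zero (r : ℕ) : mcoef N r 0 = (N:ℝ) - 2*(r:ℝ) := by simp [mcoef]

lemma mcoef_succ (r j : ℕ) :
    mcoef N r (j+1) = mcoef N r j + ((N:ℝ) - 2*((r:ℝ)+(j:ℝ)+1)) := by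
  rw [mcoef, Finset.sum_range_succ, ← mcoef]
  push_cast
  ring

lemma aminus_iter {r : ℕ} {W : Finset (Fin N) → ℝ} (hsupp : suppOn N r W)
    (h0 : Aminus N W = 0) (j : ℕ) :
    Aminus N ((Aplus N)^[j+1] W) = mcoef N r j • (Aplus N)^[j] W := by
  induction j with
  | zero =>
    funext S
    rw [Function.iterate_succ_apply', Function.iterate_zero_apply,
      comm_pointwise, h0]
    have hA0 : Aplus N (0 : Finset (Fin N) → ℝ) S = 0 := by simp [Aplus]
    rw [hA0, zero_add]
    simp only [Function.iterate_zero_apply, Pi.smul_apply, smul_eq_mul]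
    rw [mcoef_zero]
    by_cases hWS : W S = 0
    · simp [hWS]
    · have hcard : S.card = r := by
        by_contra h; exact hWS (hsupp S h)
      rw [hcard]
  | succ j ih =>
    funext S
    rw [Function.iterate_succ_apply' (Aplus N) (j+1), comm_pointwise, ih, aplus_smul]
    have hstep : Aplus N ((Aplus N)^[j] W) = (Aplus N)^[j+1] W :=
      (Function.iterate_succ_apply' _ _ _).symm
    rw [hstep]
    simp only [Pi.smul_apply, smul_eq_mul]
    by_cases hFS : (Aplus N)^[j+1] W S = 0
    · simp [hFS]
    · have hcard : S.card = r + (j+1) := by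
        by_contra h; exact hFS (suppOn_iter hsupp (j+1) S h)
      rw [hcard, mcoef_succ]
      push_cast
      ring

noncomputable def Ssum (N : ℕ) (W : Finset (Fin N) → ℝ) (n : ℕ) (a : ℕ → ℝ) :
    Finset (Fin N) → ℝ := ∑ j ∈ Finset.range (n+1), a j • (Aplus N)^[j] W

lemma Ssum_congr {W : Finset (Fin N) → ℝ} {n : ℕ} {a b : ℕ → ℝ}
    (h : ∀ j ≤ n, a j = b j) : Ssum N W n a = Ssum N W n b := by
  unfold Ssum
  refine Finset.sum_congr rfl fun j hj => ?_
  rw [h j (Nat.lt_succ_iff.mp (Finset.mem_range.mp hj))]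

lemma Ssum_smul {W : Finset (Fin N) → ℝ} {n : ℕ} (k : ℝ) (a : ℕ → ℝ) :
    k • Ssum N W n a = Ssum N W n (fun j => k * a j) := by
  unfold Ssum
  rw [Finset.smul_sum]
  simp [smul_smul]

lemma Ssum_sub {W : Finset (Fin N) → ℝ} {n : ℕ} (a b : ℕ → ℝ) :
    Ssum N W n a - Ssum N W n b = Ssum N W n (fun j => a j - b j) := by
  unfold Ssum
  rw [← Finset.sum_sub_distrib]
  simp [sub_smul]

lemma Ssum_add {W : Finset (Fin N) → ℝ} {n : ℕ} (a b : ℕ → ℝ) :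
    Ssum N W n a + Ssum N W n b = Ssum N W n (fun j => a j + b j) := by
  unfold Ssum
  rw [← Finset.sum_add_distrib]
  simp [add_smul]

lemma Ssum_aplus {r n : ℕ} {W : Finset (Fin N) → ℝ} (hW : suppOn N r W)
    (hn : r + n = N) (a : ℕ → ℝ) :
    Aplus N (Ssum N W n a) = Ssum N W n (fun j => if j = 0 then 0 else a (j-1)) := by
  unfold Ssum
  rw [aplus_sum]
  simp_rw [aplus_smul]
  have hiter : ∀ j : ℕ, Aplus N ((Aplus N)^[j] W) = (Aplus N)^[j+1] W :=
    fun j => (Function.iterate_succ_apply' _ _ _).symm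
  simp_rw [hiter]
  rw [Finset.sum_range_succ, iter_top hW (by omega : N < r + (n+1))]
  rw [Finset.sum_range_succ' (fun j => (if j = 0 then (0:ℝ) else a (j-1)) • (Aplus N)^[j] W) n]
  simp

lemma Ssum_aminus {r n : ℕ} {W : Finset (Fin N) → ℝ} (hW : suppOn N r W)
    (h0 : Aminus N W = 0) {a : ℕ → ℝ} (ha : a (n+1) = 0) :
    Aminus N (Ssum N W n a) = Ssum N W n (fun j => mcoef N r j * a (j+1)) := by
  unfold Ssum
  rw [aminus_sum]
  simp_rw [aminus_smul]
  rw [Finset.sum_range_succ' (fun j => a j • Aminus N ((Aplus N)^[j] W)) n]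
  simp_rw [aminus_iter hW h0]
  rw [Function.iterate_zero_apply, h0]
  rw [Finset.sum_range_succ (fun j => (mcoef N r j * a (j+1)) • (Aplus N)^[j] W) n, ha]
  simp [smul_smul, mul_comm]

lemma Lap_eq (V : Finset (Fin N) → ℝ) :
    Lap N V = (N:ℝ) • V - Aplus N V - Aminus N V := by
  funext S
  simp [Lap, Adj]
  ring

lemma Lap_Ssum {r n : ℕ} {W : Finset (Fin N) → ℝ} (hW : suppOn N r W)
    (h0 : Aminus N W = 0) (hn : r + n = N) {a : ℕ → ℝ} (ha : a (n+1) = 0) :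
    Lap N (Ssum N W n a) = Ssum N W n
      (fun j => (N:ℝ) * a j - (if j = 0 then 0 else a (j-1)) - mcoef N r j * a (j+1)) := by
  rw [Lap_eq, Ssum_smul, Ssum_aplus hW hn, Ssum_aminus hW h0 ha, Ssum_sub, Ssum_sub]

lemma Ssum_T {r n : ℕ} {W : Finset (Fin N) → ℝ} (hW : suppOn N r W) (a : ℕ → ℝ) :
    Tdiag N (Ssum N W n a)
      = Ssum N W n (fun j => Real.sqrt (2*((r:ℝ)+(j:ℝ))) * a j) := by
  funext S
  unfold Ssum Tdiag
  rw [Finset.sum_apply, Finset.mul_sum, Finset.sum_apply]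
  refine Finset.sum_congr rfl fun j hj => ?_
  simp only [Pi.smul_apply, smul_eq_mul]
  by_cases hF : (Aplus N)^[j] W S = 0
  · rw [hF]; ring
  · have hcard : S.card = r + j := by
      by_contra h; exact hF (suppOn_iter hW j S h)
    rw [hcard]
    push_cast
    ring

lemma sqrt2mul (x y : ℝ) (hx : 0 ≤ x) (hy : 0 ≤ y) :
    Real.sqrt (2*x) * Real.sqrt (2*y) = 2 * Real.sqrt (x*y) := by
  rw [← Real.sqrt_mul (by positivity), show 2*x*(2*y) = 2^2*(x*y) by ring,
    Real.sqrt_mul (by positivity), Real.sqrt_sq (by norm_num)]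

lemma coeff_case0 {α β lam N m cj cp x tj tp s1 s2 : ℝ}
    (h1 : tj*tj = 2*x) (h2 : tj*tp = 2*s1)
    (heig : (2*x*(α-N)+β*N)*cj + (2*s1-β)*m*cp + (2*s2-β)*0 = lam*cj) :
    tj*(α*(tj*cj) - (N*(tj*cj) - 0 - m*(tp*cp))) + β*(N*cj - 0 - m*cp) = lam*cj := by
  linear_combination heig + (α-N)*cj*h1 + m*cp*h2

lemma coeff_case {α β lam N m cm cj cp x tq tj tp s1 s2 : ℝ}
    (h1 : tj*tj = 2*x) (h2 : tj*tp = 2*s1) (h3 : tj*tq = 2*s2)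
    (heig : (2*x*(α-N)+β*N)*cj + (2*s1-β)*m*cp + (2*s2-β)*cm = lam*cj) :
    tj*(α*(tj*cj) - (N*(tj*cj) - tq*cm - m*(tp*cp))) + β*(N*cj - cm - m*cp) = lam*cj := by
  linear_combination heig + (α-N)*cj*h1 + m*cp*h2 + cm*h3

end HBDOaux

open HBDOaux in
/-- if `(c_0,…,c_{N−r})` satisfies the tridiagonal eigenvector equations
(with conventions `c_{−1} = 0`, `c_{N−r+1} = 0`), then for every `W ∈ W_r` the vertex
function `V = Σ_{j=0}^{N−r} c_j·A₊^{j}W` satisfies `HBDO V = λV`. -/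
theorem hbdo_eigenvector (N : ℕ) (hN : 1 ≤ N) (α β : ℝ) (r : ℕ) (hr : r ≤ N) (lam : ℝ)
    (c : ℕ → ℝ) (hc : ∀ j, N - r < j → c j = 0)
    (heig : ∀ j ≤ N - r,
      (2 * ((r : ℝ) + (j : ℝ)) * (α - (N : ℝ)) + β * (N : ℝ)) * c j
        + (2 * Real.sqrt (((r : ℝ) + (j : ℝ)) * ((r : ℝ) + (j : ℝ) + 1)) - β)
            * mcoef N r j * c (j + 1)
        + (2 * Real.sqrt (((r : ℝ) + (j : ℝ)) * ((r : ℝ) + (j : ℝ) - 1)) - β)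
            * (if j = 0 then 0 else c (j - 1))
      = lam * c j)
    (W : Finset (Fin N) → ℝ) (hW : memW N r W) :
    HBDO N α β (∑ j ∈ Finset.range (N - r + 1), c j • (Aplus N)^[j] W)
      = lam • ∑ j ∈ Finset.range (N - r + 1), c j • (Aplus N)^[j] W := by
  have hsupp := hW.1
  have h0 : Aminus N W = 0 := aminus_eq_zero hW
  have hn : r + (N - r) = N := by omega
  have hcn : c (N - r + 1) = 0 := hc _ (by omega)
  show HBDO N α β (Ssum N W (N-r) c) = lam • Ssum N W (N-r) c
  have hHB : HBDO N α β (Ssum N W (N-r) c)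
      = Tdiag N ((α • Tdiag N (Ssum N W (N-r) c)) - Lap N (Tdiag N (Ssum N W (N-r) c)))
        + β • Lap N (Ssum N W (N-r) c) := rfl
  rw [hHB, Ssum_T hsupp, Lap_Ssum hsupp h0 hn (by simp [hcn]), Ssum_smul, Ssum_sub,
    Ssum_T hsupp, Lap_Ssum hsupp h0 hn hcn, Ssum_smul, Ssum_add, Ssum_smul]
  refine Ssum_congr fun j hj => ?_
  have heig' := heig j hj
  match j with
  | 0 =>
    simp only [Nat.cast_zero, add_zero, if_true] at heig' ⊢
    have h1 : Real.sqrt (2*(r:ℝ)) * Real.sqrt (2*(r:ℝ)) = 2*(r:ℝ) :=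
      Real.mul_self_sqrt (by positivity)
    have h2 : Real.sqrt (2*(r:ℝ)) * Real.sqrt (2*((r:ℝ)+((0+1:ℕ):ℝ)))
        = 2*Real.sqrt ((r:ℝ)*((r:ℝ)+1)) := by
      have h := sqrt2mul (r:ℝ) ((r:ℝ)+1) (by positivity) (by positivity)
      convert h using 3
      push_cast; ring
    exact coeff_case0 h1 h2 heig'
  | (k+1) =>
    simp only [if_neg (Nat.succ_ne_zero k), Nat.add_sub_cancel] at heig' ⊢
    have h1 : Real.sqrt (2*((r:ℝ)+((k+1:ℕ):ℝ))) * Real.sqrt (2*((r:ℝ)+((k+1:ℕ):ℝ)))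
        = 2*((r:ℝ)+((k+1:ℕ):ℝ)) := Real.mul_self_sqrt (by positivity)
    have h2 : Real.sqrt (2*((r:ℝ)+((k+1:ℕ):ℝ))) * Real.sqrt (2*((r:ℝ)+((k+1+1:ℕ):ℝ)))
        = 2*Real.sqrt (((r:ℝ)+((k+1:ℕ):ℝ))*((r:ℝ)+((k+1:ℕ):ℝ)+1)) := by
      have h := sqrt2mul ((r:ℝ)+((k+1:ℕ):ℝ)) ((r:ℝ)+((k+1:ℕ):ℝ)+1) (by positivity) (by positivity)
      convert h using 3
      push_cast; ring
    have h3 : Real.sqrt (2*((r:ℝ)+((k+1:ℕ):ℝ))) * Real.sqrt (2*((r:ℝ)+((k:ℕ):ℝ)))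
        = 2*Real.sqrt (((r:ℝ)+((k+1:ℕ):ℝ))*((r:ℝ)+((k+1:ℕ):ℝ)-1)) := by
      have h := sqrt2mul ((r:ℝ)+((k+1:ℕ):ℝ)) ((r:ℝ)+((k:ℕ):ℝ)) (by positivity) (by positivity)
      rw [h]
      congr 1
      push_cast; ring
    exact coeff_case h1 h2 h3 heig'
end
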